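/- For a Pólya urn, the proportion of black balls Z_t = b_t/(w_t + b_t) converges almost surely as t → ∞ to a random variable Θ. -/

import Mathlib

open Finset MeasureTheory ProbabilityTheory

/-- White weight of the Pólya urn after the draws `x 0, …, x (t-1)`
(`x i = true` means the `i`-th draw was black). -/
noncomputable def polyaW (w0 s : ℝ) (x : ℕ → Bool) : ℕ → ℝ
  | 0 => w0
  | t + 1 => polyaW w0 s x t + if x t then 0 else s

/-- Black weight of the Pólya urn after the draws `x 0, …, x (t-1)`. -/
noncomputable def polyaB (b0 s : ℝ) (x : ℕ → Bool) : ℕ → ℝ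
  | 0 => b0
  | t + 1 => polyaB b0 s x t + if x t then s else 0

/-- Joint probability that the first `n` draws of the Pólya urn are
`x 0, …, x (n-1)`. -/
noncomputable def polyaJoint (w0 b0 s : ℝ) (x : ℕ → Bool) (n : ℕ) : ℝ :=
  ∏ t ∈ range n,
    (if x t then polyaB b0 s x t else polyaW w0 s x t) /
      (polyaW w0 s x t + polyaB b0 s x t)


lemma polyaW_congr {w0 s : ℝ} {x y : ℕ → Bool} {n : ℕ} (h : ∀ i < n, x i = y i) :
    polyaW w0 s x n = polyaW w0 s y n := by
  induction n with
  | zero => rfl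
  | succ n ih =>
      simp only [polyaW, ih (fun i hi => h i (by omega)), h n (by omega)]

lemma polyaB_congr {b0 s : ℝ} {x y : ℕ → Bool} {n : ℕ} (h : ∀ i < n, x i = y i) :
    polyaB b0 s x n = polyaB b0 s y n := by
  induction n with
  | zero => rfl
  | succ n ih =>
      simp only [polyaB, ih (fun i hi => h i (by omega)), h n (by omega)]

lemma polyaJoint_congr {w0 b0 s : ℝ} {x y : ℕ → Bool} {n : ℕ} (h : ∀ i < n, x i = y i) :
    polyaJoint w0 b0 s x n = polyaJoint w0 b0 s y n := by
  unfold polyaJoint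
  refine Finset.prod_congr rfl fun t ht => ?_
  rw [Finset.mem_range] at ht
  rw [polyaW_congr (fun i hi => h i (by omega)), polyaB_congr (fun i hi => h i (by omega)),
    h t ht]

lemma polyaB_eq (b0 s : ℝ) (x : ℕ → Bool) (n : ℕ) :
    polyaB b0 s x n = b0 + s * ∑ i ∈ range n, (if x i then (1:ℝ) else 0) := by
  induction n with
  | zero => simp [polyaB]
  | succ n ih =>
      rw [polyaB, ih, Finset.sum_range_succ]
      by_cases h : x n <;> simp [h] <;> ring

lemma polyaWB (w0 b0 s : ℝ) (x : ℕ → Bool) (n : ℕ) :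
    polyaW w0 s x n + polyaB b0 s x n = w0 + b0 + s * n := by
  induction n with
  | zero => simp [polyaW, polyaB]
  | succ n ih =>
      rw [polyaW, polyaB]
      push_cast
      by_cases h : x n <;> simp [h] <;> linarith

lemma polyaW_pos {w0 s : ℝ} (hw : 0 < w0) (hs : 0 ≤ s) (x : ℕ → Bool) (n : ℕ) :
    0 < polyaW w0 s x n := by
  induction n with
  | zero => exact hw
  | succ n ih => rw [polyaW]; by_cases h : x n <;> simp [h] <;> linarith

lemma polyaB_pos {b0 s : ℝ} (hb : 0 < b0) (hs : 0 ≤ s) (x : ℕ → Bool) (n : ℕ) :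
    0 < polyaB b0 s x n := by
  induction n with
  | zero => exact hb
  | succ n ih => rw [polyaB]; by_cases h : x n <;> simp [h] <;> linarith

lemma polyaJoint_nonneg {w0 b0 s : ℝ} (hw : 0 < w0) (hb : 0 < b0) (hs : 0 ≤ s)
    (x : ℕ → Bool) (n : ℕ) : 0 ≤ polyaJoint w0 b0 s x n := by
  refine Finset.prod_nonneg fun t _ => div_nonneg ?_ ?_
  · by_cases h : x t <;> simp [h, (polyaB_pos hb hs x t).le, (polyaW_pos hw hs x t).le]
  · have := polyaW_pos hw hs x t; have := polyaB_pos hb hs x t; linarith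

lemma polyaJoint_succ (w0 b0 s : ℝ) (x : ℕ → Bool) (n : ℕ) :
    polyaJoint w0 b0 s x (n + 1) =
      polyaJoint w0 b0 s x n *
        ((if x n then polyaB b0 s x n else polyaW w0 s x n) /
          (polyaW w0 s x n + polyaB b0 s x n)) := by
  unfold polyaJoint
  rw [Finset.prod_range_succ]

/-- For a Pólya urn process, i.e. any `{0,1}`-valued process `X` whose
finite-dimensional distributions are the Pólya urn joint probabilities, the
proportion of black balls `Z_t = b_t / (w_t + b_t)` converges almost surely,
as `t → ∞`, to some random variable `Θ`. -/
theorem polya_proportion_converges_as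
    {Ω : Type*} {mΩ : MeasurableSpace Ω} {P : Measure Ω} [IsProbabilityMeasure P]
    (w0 b0 s : ℝ) (hw : 0 < w0) (hb : 0 < b0) (hs : 0 < s)
    (X : ℕ → Ω → ℝ) (hX : ∀ t, StronglyMeasurable (X t))
    (hval : ∀ t ω, X t ω = 0 ∨ X t ω = 1)
    (hlaw : ∀ (n : ℕ) (x : ℕ → Bool),
      P {ω | ∀ t < n, X t ω = if x t then 1 else 0} =
        ENNReal.ofReal (polyaJoint w0 b0 s x n)) :
    ∃ Θ : Ω → ℝ, ∀ᵐ ω ∂P,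
      Filter.Tendsto
        (fun t =>
          (b0 + s * ∑ i ∈ range t, X i ω) /
            ((w0 + s * ∑ i ∈ range t, (1 - X i ω)) +
              (b0 + s * ∑ i ∈ range t, X i ω)))
        Filter.atTop (nhds (Θ ω)) := by
  classical
  -- the proportion process, with simplified denominator
  set Z : ℕ → Ω → ℝ :=
    fun n ω => (b0 + s * ∑ i ∈ range n, X i ω) / (w0 + b0 + s * n) with hZdef
  -- atoms
  set A : ℕ → (ℕ → Bool) → Set Ω :=
    fun n x => {ω | ∀ t < n, X t ω = if x t then 1 else 0} with hAdef
  have hden : ∀ n : ℕ, (0:ℝ) < w0 + b0 + s * n := by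
    intro n
    have : (0:ℝ) ≤ s * n := by positivity
    linarith
  have hX01 : ∀ i ω, (0:ℝ) ≤ X i ω ∧ X i ω ≤ 1 := by
    intro i ω; rcases hval i ω with h | h <;> rw [h] <;> constructor <;> norm_num
  have hZ01 : ∀ n ω, (0:ℝ) ≤ Z n ω ∧ Z n ω ≤ 1 := by
    intro n ω
    have h1 : (0:ℝ) ≤ ∑ i ∈ range n, X i ω :=
      Finset.sum_nonneg fun i _ => (hX01 i ω).1
    have h2 : ∑ i ∈ range n, X i ω ≤ n := by
      calc ∑ i ∈ range n, X i ω ≤ ∑ i ∈ range n, (1:ℝ) :=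
            Finset.sum_le_sum fun i _ => (hX01 i ω).2
        _ = n := by simp
    constructor
    · exact div_nonneg (by nlinarith) (hden n).le
    · rw [div_le_one (hden n)]; nlinarith
  -- measurability of atoms
  have measA : ∀ n x, MeasurableSet (A n x) := by
    intro n x
    have : A n x = ⋂ t ∈ Finset.range n, {ω | X t ω = if x t then 1 else 0} := by
      ext ω; simp [hAdef]
    rw [this]
    refine Finset.measurableSet_biInter _ fun t _ => ?_
    exact (hX t).measurable (measurableSet_singleton _)
  -- measurability and integrability of Z
  have measZ : ∀ n, StronglyMeasurable (Z n) := by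
    intro n
    refine Measurable.stronglyMeasurable ?_
    refine Measurable.div ?_ measurable_const
    refine Measurable.add measurable_const ?_
    exact (Finset.measurable_sum (range n) fun i _ => (hX i).measurable).const_mul s
  have hZint : ∀ n, Integrable (Z n) P := by
    intro n
    refine Integrable.mono' (integrable_const (1:ℝ)) (measZ n).aestronglyMeasurable
      (Filter.Eventually.of_forall fun ω => ?_)
    rw [Real.norm_eq_abs, abs_le]
    exact ⟨by linarith [(hZ01 n ω).1], (hZ01 n ω).2⟩
  -- the sigma-algebra maps
  set Y : (n : ℕ) → Ω → (Fin n → Bool) :=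
    fun n ω i => if X i ω = 1 then true else false with hYdef
  have hfib : ∀ (n : ℕ) (b : Fin n → Bool),
      Y n ⁻¹' {b} = A n (fun t => if h : t < n then b ⟨t, h⟩ else false) := by
    intro n b
    ext ω
    simp only [Set.mem_preimage, Set.mem_singleton_iff, hAdef, Set.mem_setOf_eq]
    constructor
    · intro h t ht
      have hc := congrFun h ⟨t, ht⟩
      simp only [hYdef] at hc
      have hd : (if h : t < n then b ⟨t, h⟩ else false) = b ⟨t, ht⟩ := dif_pos ht
      simp only [hd]
      rcases hval t ω with h0 | h1
      · rw [if_neg (by rw [h0]; norm_num)] at hc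
        rw [← hc]; simpa using h0
      · rw [if_pos h1] at hc
        rw [← hc]; simpa using h1
    · intro h
      funext i
      have hthis := h i i.2
      have hd : (if h : (i : ℕ) < n then b ⟨i, h⟩ else false) = b i := by
        rw [dif_pos i.2]
      simp only [hd] at hthis
      simp only [hYdef]
      cases hb : b i
      · norm_num [hb] at hthis
        simp [hthis]
      · norm_num [hb] at hthis
        simp [hthis]
  have measfib : ∀ (n : ℕ) (b : Fin n → Bool), MeasurableSet (Y n ⁻¹' {b}) := by
    intro n b; rw [hfib]; exact measA _ _
  -- the filtration
  set ℱ : Filtration ℕ mΩ :=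
    { seq := fun n => MeasurableSpace.comap (Y n) ⊤
      mono' := by
        intro m n hmn t ht
        obtain ⟨S, -, rfl⟩ := ht
        refine ⟨(fun v : Fin n → Bool => fun i : Fin m => v (Fin.castLE hmn i)) ⁻¹' S,
          trivial, rfl⟩
      le' := by
        intro n t ht
        obtain ⟨S, -, rfl⟩ := ht
        have : Y n ⁻¹' S = ⋃ b ∈ S, Y n ⁻¹' {b} := by
          ext ω; simp
        rw [this]
        exact MeasurableSet.biUnion (Set.to_countable S) fun b _ => measfib n b } with hFdef
  -- adaptedness
  have hadp : StronglyAdapted ℱ Z := by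
    intro n
    have hcomp : Z n = (fun v : Fin n → Bool =>
        (b0 + s * ∑ i : Fin n, (if v i then (1:ℝ) else 0)) / (w0 + b0 + s * n)) ∘ Y n := by
      funext ω
      simp only [Function.comp_apply, hZdef]
      have hsum : ∑ i ∈ range n, X i ω = ∑ i : Fin n, (if Y n ω i then (1:ℝ) else 0) := by
        rw [← Fin.sum_univ_eq_sum_range (fun i => X i ω) n]
        refine Finset.sum_congr rfl fun i _ => ?_
        simp only [hYdef]
        rcases hval i ω with h0 | h1
        · rw [if_neg (by rw [h0]; norm_num)]; simp [h0]
        · rw [if_pos h1]; simp [h1]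
      rw [hsum]
    rw [hcomp]
    refine Measurable.stronglyMeasurable ?_
    have hY : @Measurable Ω (Fin n → Bool) (MeasurableSpace.comap (Y n) ⊤) ⊤ (Y n) :=
      (@measurable_iff_comap_le Ω (Fin n → Bool) (MeasurableSpace.comap (Y n) ⊤) ⊤ (Y n)).mpr
        le_rfl
    have hg : @Measurable (Fin n → Bool) ℝ ⊤ _ (fun v : Fin n → Bool =>
        (b0 + s * ∑ i : Fin n, (if v i then (1:ℝ) else 0)) / (w0 + b0 + s * n)) :=
      measurable_from_top
    exact hg.comp hY
  -- probability of an atom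
  have hPA : ∀ n x, P (A n x) = ENNReal.ofReal (polyaJoint w0 b0 s x n) := fun n x => hlaw n x
  -- constancy of Z n on atoms
  have hconst : ∀ n x ω, ω ∈ A n x →
      Z n ω = (b0 + s * ∑ i ∈ range n, (if x i then (1:ℝ) else 0)) / (w0 + b0 + s * n) := by
    intro n x ω hω
    simp only [hZdef]
    have hsum : ∑ i ∈ range n, X i ω = ∑ i ∈ range n, (if x i then (1:ℝ) else 0) :=
      Finset.sum_congr rfl fun i hi => hω i (Finset.mem_range.mp hi)
    rw [hsum]
  -- integral of Z m over an atom at level m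
  have intA : ∀ m x, ∫ ω in A m x, Z m ω ∂P =
      ((b0 + s * ∑ i ∈ range m, (if x i then (1:ℝ) else 0)) / (w0 + b0 + s * m)) *
        polyaJoint w0 b0 s x m := by
    intro m x
    rw [setIntegral_congr_fun (measA m x) (fun ω hω => hconst m x ω hω),
      setIntegral_const, measureReal_def, hPA, ENNReal.toReal_ofReal (polyaJoint_nonneg hw hb hs.le x m)]
    rw [smul_eq_mul, mul_comm]
  -- key one-step computation over atoms
  have key : ∀ (n : ℕ) (x : ℕ → Bool),
      ∫ ω in A n x, Z (n + 1) ω ∂P = ∫ ω in A n x, Z n ω ∂P := by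
    intro n x
    set x1 := Function.update x n true with hx1
    set x0 := Function.update x n false with hx0
    have hpre1 : ∀ i < n, x1 i = x i := fun i hi => Function.update_of_ne (by omega) _ _
    have hpre0 : ∀ i < n, x0 i = x i := fun i hi => Function.update_of_ne (by omega) _ _
    have hx1n : x1 n = true := by simp [hx1]
    have hx0n : x0 n = false := by simp [hx0]
    have hApre : ∀ y z : ℕ → Bool, (∀ i < n, y i = z i) → A n y = A n z := by
      intro y z h; ext ω
      simp only [hAdef, Set.mem_setOf_eq]
      constructor <;> intro hh t ht
      · rw [← h t ht]; exact hh t ht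
      · rw [h t ht]; exact hh t ht
    have hsucc : ∀ y : ℕ → Bool,
        A (n + 1) y = A n y ∩ {ω | X n ω = if y n then 1 else 0} := by
      intro y; ext ω
      simp only [hAdef, Set.mem_setOf_eq, Set.mem_inter_iff]
      constructor
      · intro h; exact ⟨fun t ht => h t (by omega), h n (by omega)⟩
      · rintro ⟨h1, h2⟩ t ht
        rcases Nat.lt_succ_iff_lt_or_eq.mp ht with h | rfl
        · exact h1 t h
        · exact h2
    have hsplit : A n x = A (n + 1) x1 ∪ A (n + 1) x0 := by
      rw [hsucc, hsucc, hApre x1 x hpre1, hApre x0 x hpre0]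
      ext ω
      simp only [Set.mem_union, Set.mem_inter_iff, Set.mem_setOf_eq, hx1n, hx0n]
      constructor
      · intro h
        rcases hval n ω with h0 | h1
        · right; exact ⟨h, by simp [h0]⟩
        · left; exact ⟨h, by simp [h1]⟩
      · rintro (⟨h, -⟩ | ⟨h, -⟩) <;> exact h
    have hdisj : Disjoint (A (n + 1) x1) (A (n + 1) x0) := by
      rw [Set.disjoint_left]
      intro ω h1 h0
      simp only [hAdef, Set.mem_setOf_eq] at h1 h0
      have e1 := h1 n (by omega)
      have e0 := h0 n (by omega)
      rw [hx1n] at e1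
      rw [hx0n] at e0
      simp only [if_true] at e1
      norm_num at e0
      rw [e1] at e0
      norm_num at e0
    have hBp : polyaB b0 s x n = b0 + s * ∑ i ∈ range n, (if x i then (1:ℝ) else 0) :=
      polyaB_eq b0 s x n
    have hWB : polyaW w0 s x n + polyaB b0 s x n = w0 + b0 + s * n := polyaWB w0 b0 s x n
    have hJ1 : polyaJoint w0 b0 s x1 (n + 1) =
        polyaJoint w0 b0 s x n * (polyaB b0 s x n / (w0 + b0 + s * n)) := by
      rw [polyaJoint_succ, polyaJoint_congr hpre1, polyaB_congr hpre1, polyaW_congr hpre1,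
        hWB, hx1n]
      simp
    have hJ0 : polyaJoint w0 b0 s x0 (n + 1) =
        polyaJoint w0 b0 s x n * (polyaW w0 s x n / (w0 + b0 + s * n)) := by
      rw [polyaJoint_succ, polyaJoint_congr hpre0, polyaB_congr hpre0, polyaW_congr hpre0,
        hWB, hx0n]
      simp
    have hN1 : ∑ i ∈ range (n + 1), (if x1 i then (1:ℝ) else 0)
        = (∑ i ∈ range n, (if x i then (1:ℝ) else 0)) + 1 := by
      rw [Finset.sum_range_succ, hx1n]
      simp only [if_true]
      congr 1
      exact Finset.sum_congr rfl fun i hi => by rw [hpre1 i (Finset.mem_range.mp hi)]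
    have hN0 : ∑ i ∈ range (n + 1), (if x0 i then (1:ℝ) else 0)
        = ∑ i ∈ range n, (if x i then (1:ℝ) else 0) := by
      rw [Finset.sum_range_succ, hx0n]
      simp only [Bool.false_eq_true, if_false, add_zero]
      exact Finset.sum_congr rfl fun i hi => by rw [hpre0 i (Finset.mem_range.mp hi)]
    rw [intA n x, hsplit,
      setIntegral_union hdisj (measA _ _) ((hZint _).integrableOn) ((hZint _).integrableOn),
      intA (n + 1) x1, intA (n + 1) x0, hJ1, hJ0, hN1, hN0, hBp]
    have hWval : polyaW w0 s x n
        = (w0 + b0 + s * n) - (b0 + s * ∑ i ∈ range n, (if x i then (1:ℝ) else 0)) := by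
      rw [← hWB, hBp]; ring
    rw [hWval]
    have hT : (0:ℝ) < w0 + b0 + s * n := hden n
    have hTs : (0:ℝ) < w0 + b0 + s * ((n : ℝ) + 1) := by have := hden (n + 1); push_cast at this; linarith
    have hT' : (w0 + b0 + s * (n : ℝ)) ≠ 0 := ne_of_gt hT
    have hTs' : (w0 + b0 + s * ((n : ℝ) + 1)) ≠ 0 := ne_of_gt hTs
    push_cast
    field_simp
    ring
  -- equality of set integrals on the filtration
  have hsetint : ∀ (n : ℕ) (t : Set Ω), MeasurableSet[ℱ n] t →
      ∫ ω in t, Z n ω ∂P = ∫ ω in t, Z (n + 1) ω ∂P := by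
    intro n t ht
    have ht' : MeasurableSet[MeasurableSpace.comap (Y n) ⊤] t := ht
    obtain ⟨S, -, rfl⟩ := ht'
    have hdecomp : Y n ⁻¹' S = ⋃ b ∈ (Set.toFinite S).toFinset, Y n ⁻¹' {b} := by
      ext ω
      simp only [Set.mem_preimage, Set.mem_iUnion, Set.mem_singleton_iff,
        Set.Finite.mem_toFinset, exists_prop]
      exact ⟨fun h => ⟨Y n ω, h, rfl⟩, fun ⟨b, hb, he⟩ => he ▸ hb⟩
    have hpd : Set.Pairwise ((Set.toFinite S).toFinset : Set (Fin n → Bool))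
        (Function.onFun Disjoint fun b => Y n ⁻¹' {b}) := by
      intro b1 hb1 b2 hb2 hne
      simp only [Function.onFun]
      rw [Set.disjoint_left]
      intro ω h1 h2
      simp only [Set.mem_preimage, Set.mem_singleton_iff] at h1 h2
      exact hne (h1.symm.trans h2)
    rw [hdecomp,
      integral_biUnion_finset _ (fun b _ => measfib n b) hpd
        (fun b _ => (hZint n).integrableOn),
      integral_biUnion_finset _ (fun b _ => measfib n b) hpd
        (fun b _ => (hZint (n + 1)).integrableOn)]
    refine Finset.sum_congr rfl fun b _ => ?_
    rw [hfib n b]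
    exact (key n _).symm
  -- martingale property
  have hmartle : ∀ n, Z n =ᵐ[P] P[Z (n + 1) | ℱ n] := by
    intro n
    exact ae_eq_condExp_of_forall_setIntegral_eq (ℱ.le n) (hZint (n + 1))
      (fun t _ _ => (hZint n).integrableOn)
      (fun t ht _ => hsetint n t ht)
      ((hadp n).aestronglyMeasurable)
  have hmart : Martingale Z ℱ P := martingale_nat hadp hZint hmartle
  -- L¹ bound and convergence
  have hbdd : ∀ n, eLpNorm (Z n) 1 P ≤ (1 : ENNReal) := by
    intro n
    have h := eLpNorm_le_of_ae_bound (μ := P) (p := 1) (f := Z n) (C := 1)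
      (Filter.Eventually.of_forall fun ω => by
        rw [Real.norm_eq_abs, abs_le]
        exact ⟨by linarith [(hZ01 n ω).1], (hZ01 n ω).2⟩)
    simpa using h
  have hconv := hmart.submartingale.ae_tendsto_limitProcess hbdd
  refine ⟨ℱ.limitProcess Z P, ?_⟩
  filter_upwards [hconv] with ω hω
  have heq : (fun t : ℕ =>
      (b0 + s * ∑ i ∈ range t, X i ω) /
        ((w0 + s * ∑ i ∈ range t, (1 - X i ω)) + (b0 + s * ∑ i ∈ range t, X i ω)))
      = fun t => Z t ω := by
    funext t
    have hsub : ∑ i ∈ range t, (1 - X i ω) = (t : ℝ) - ∑ i ∈ range t, X i ω := by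
      rw [Finset.sum_sub_distrib]; simp
    simp only [hZdef]
    rw [hsub]
    congr 1
    ring
  rw [heq]
  exact hω
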